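/- Let S and A be finite nonempty sets, let γ ∈ [0,1), let T : S × A → PMF(S) be a transition kernel, let ρ₀ be a probability distribution on S, and let π and π_E be stationary policies (maps S → PMF(A)). Let ρ_π(s,a) = (1−γ) Σ_{t=0}^{∞} γ^t P(s_t = s, a_t = a | π) denote the discounted state–action occupancy measure induced by starting at s₀ ∼ ρ₀ and following a_t ∼ π(·|s_t), s_{t+1} ∼ T(·|s_t, a_t), and similarly ρ_{π_E} for π_E; let d_{π_E} denote the discounted state occupancy measure of π_E. Then D_TV(ρ_π, ρ_{π_E}) ≤ (1/(1−γ)) · Σ_{s∈S} d_{π_E}(s) · D_TV(π(·|s), π_E(·|s)). -/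

import Mathlib

/-- `stateDist T π ρ₀ t s` is the probability `P(s_t = s | π)` that the Markov chain
induced by the policy `π` in the MDP with transition kernel `T` and initial state
distribution `ρ₀` is in state `s` at time `t`. -/
noncomputable def stateDist {S A : Type*} [Fintype S] [Fintype A]
    (T : S → A → PMF S) (π : S → PMF A) (ρ₀ : PMF S) : ℕ → S → ℝ
  | 0, s => (ρ₀ s).toReal
  | t + 1, s' =>
      ∑ s : S, ∑ a : A, stateDist T π ρ₀ t s * ((π s) a).toReal * ((T s a) s').toReal

/-- The discounted state occupancy measure `d_π(s) = (1−γ) Σ_t γ^t P(s_t = s | π)`. -/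
noncomputable def stateOcc {S A : Type*} [Fintype S] [Fintype A]
    (T : S → A → PMF S) (π : S → PMF A) (ρ₀ : PMF S) (γ : ℝ) (s : S) : ℝ :=
  (1 - γ) * ∑' t : ℕ, γ ^ t * stateDist T π ρ₀ t s

/-- The discounted state–action occupancy measure
`ρ_π(s,a) = (1−γ) Σ_t γ^t P(s_t = s, a_t = a | π)
          = (1−γ) Σ_t γ^t P(s_t = s | π) π(a|s)`. -/
noncomputable def saOcc {S A : Type*} [Fintype S] [Fintype A]
    (T : S → A → PMF S) (π : S → PMF A) (ρ₀ : PMF S) (γ : ℝ) (sa : S × A) : ℝ :=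
  (1 - γ) * ∑' t : ℕ, γ ^ t * stateDist T π ρ₀ t sa.1 * ((π sa.1) sa.2).toReal

/-- The total variation distance between two distributions on a finite set. -/
noncomputable def tvDist {A : Type*} [Fintype A] (p q : A → ℝ) : ℝ :=
  (1 / 2) * ∑ a : A, |p a - q a|



open Finset
open scoped ENNReal

lemma pmf_sum_toReal {α : Type*} [Fintype α] (p : PMF α) :
    ∑ a : α, (p a).toReal = 1 := by
  have h : ∑ a : α, p a = 1 := by rw [← tsum_fintype (L := SummationFilter.unconditional α)]; exact p.tsum_coe
  have h2 := congrArg ENNReal.toReal h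
  rwa [ENNReal.toReal_sum (fun a _ => p.apply_ne_top a), ENNReal.toReal_one] at h2

lemma pmf_toReal_le_one {α : Type*} (p : PMF α) (a : α) : (p a).toReal ≤ 1 := by
  have := p.coe_le_one a
  calc (p a).toReal ≤ (1 : ℝ≥0∞).toReal := ENNReal.toReal_mono (by simp) this
  _ = 1 := by simp

lemma stateDist_nonneg {S A : Type*} [Fintype S] [Fintype A]
    (T : S → A → PMF S) (π : S → PMF A) (ρ₀ : PMF S) :
    ∀ t s, 0 ≤ stateDist T π ρ₀ t s
  | 0, s => ENNReal.toReal_nonneg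
  | t + 1, s' => by
      simp only [stateDist]
      refine Finset.sum_nonneg fun s _ => Finset.sum_nonneg fun a _ => ?_
      have h := stateDist_nonneg T π ρ₀ t s
      positivity

lemma stateDist_sum_eq_one {S A : Type*} [Fintype S] [Fintype A]
    (T : S → A → PMF S) (π : S → PMF A) (ρ₀ : PMF S) :
    ∀ t, ∑ s, stateDist T π ρ₀ t s = 1
  | 0 => by simp only [stateDist]; exact pmf_sum_toReal ρ₀
  | t + 1 => by
      have ih := stateDist_sum_eq_one T π ρ₀ t
      simp only [stateDist]
      calc ∑ s' : S, ∑ s : S, ∑ a : A,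
            stateDist T π ρ₀ t s * ((π s) a).toReal * ((T s a) s').toReal
          = ∑ s : S, ∑ a : A, ∑ s' : S,
            stateDist T π ρ₀ t s * ((π s) a).toReal * ((T s a) s').toReal := by
            rw [Finset.sum_comm]
            exact Finset.sum_congr rfl fun s _ => Finset.sum_comm
        _ = ∑ s : S, ∑ a : A, stateDist T π ρ₀ t s * ((π s) a).toReal := by
            refine Finset.sum_congr rfl fun s _ => Finset.sum_congr rfl fun a _ => ?_
            rw [← Finset.mul_sum, pmf_sum_toReal, mul_one]
        _ = ∑ s : S, stateDist T π ρ₀ t s := by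
            refine Finset.sum_congr rfl fun s _ => ?_
            rw [← Finset.mul_sum, pmf_sum_toReal, mul_one]
        _ = 1 := ih

lemma stateDist_le_one {S A : Type*} [Fintype S] [Fintype A]
    (T : S → A → PMF S) (π : S → PMF A) (ρ₀ : PMF S) (t : ℕ) (s : S) :
    stateDist T π ρ₀ t s ≤ 1 := by
  have h := stateDist_sum_eq_one T π ρ₀ t
  calc stateDist T π ρ₀ t s ≤ ∑ s', stateDist T π ρ₀ t s' :=
        Finset.single_le_sum (fun s' _ => stateDist_nonneg T π ρ₀ t s') (Finset.mem_univ s)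
    _ = 1 := h

theorem tvDist_saOcc_le {S A : Type*} [Fintype S] [Fintype A]
    [Nonempty S] [Nonempty A]
    (γ : ℝ) (hγ0 : 0 ≤ γ) (hγ1 : γ < 1)
    (T : S → A → PMF S) (ρ₀ : PMF S) (π πE : S → PMF A) :
    tvDist (saOcc T π ρ₀ γ) (saOcc T πE ρ₀ γ) ≤
      (1 / (1 - γ)) *
        ∑ s : S, stateOcc T πE ρ₀ γ s *
          tvDist (fun a => ((π s) a).toReal) (fun a => ((πE s) a).toReal) := by
  have h1γ : (0:ℝ) < 1 - γ := by linarith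
  set p := stateDist T π ρ₀ with hp
  set q := stateDist T πE ρ₀ with hq
  have hp0 : ∀ t s, 0 ≤ p t s := stateDist_nonneg T π ρ₀
  have hq0 : ∀ t s, 0 ≤ q t s := stateDist_nonneg T πE ρ₀
  have hpsum : ∀ t, ∑ s, p t s = 1 := stateDist_sum_eq_one T π ρ₀
  have hqsum : ∀ t, ∑ s, q t s = 1 := stateDist_sum_eq_one T πE ρ₀
  have hp1 : ∀ t s, p t s ≤ 1 := stateDist_le_one T π ρ₀
  have hq1 : ∀ t s, q t s ≤ 1 := stateDist_le_one T πE ρ₀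
  set δ : S → ℝ := fun s => ∑ a, |((π s) a).toReal - ((πE s) a).toReal| with hδ
  set ε : ℕ → ℝ := fun t => ∑ s, q t s * δ s with hε
  set Ct : ℕ → ℝ := fun t =>
    ∑ s, ∑ a, |p t s * ((π s) a).toReal - q t s * ((πE s) a).toReal| with hCt
  set Dt : ℕ → ℝ := fun t => ∑ s, |p t s - q t s| with hDt
  have hδ0 : ∀ s, 0 ≤ δ s := fun s => Finset.sum_nonneg fun a _ => abs_nonneg _
  have hδ2 : ∀ s, δ s ≤ 2 := by
    intro s
    calc δ s ≤ ∑ a, (((π s) a).toReal + ((πE s) a).toReal) := by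
          refine Finset.sum_le_sum fun a _ => ?_
          refine (abs_sub _ _).trans ?_
          rw [abs_of_nonneg ENNReal.toReal_nonneg, abs_of_nonneg ENNReal.toReal_nonneg]
      _ = 2 := by rw [Finset.sum_add_distrib, pmf_sum_toReal, pmf_sum_toReal]; norm_num
  have hε0 : ∀ t, 0 ≤ ε t := fun t =>
    Finset.sum_nonneg fun s _ => mul_nonneg (hq0 t s) (hδ0 s)
  have hε2 : ∀ t, ε t ≤ 2 := by
    intro t
    calc ε t ≤ ∑ s, q t s * 2 :=
          Finset.sum_le_sum fun s _ => mul_le_mul_of_nonneg_left (hδ2 s) (hq0 t s)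
      _ = 2 := by rw [← Finset.sum_mul, hqsum]; norm_num
  have hC0 : ∀ t, 0 ≤ Ct t := fun t =>
    Finset.sum_nonneg fun s _ => Finset.sum_nonneg fun a _ => abs_nonneg _
  have hC2 : ∀ t, Ct t ≤ 2 := by
    intro t
    calc Ct t ≤ ∑ s, ∑ a, (p t s * ((π s) a).toReal + q t s * ((πE s) a).toReal) := by
          refine Finset.sum_le_sum fun s _ => Finset.sum_le_sum fun a _ => ?_
          refine (abs_sub _ _).trans ?_
          rw [abs_of_nonneg (mul_nonneg (hp0 t s) ENNReal.toReal_nonneg),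
            abs_of_nonneg (mul_nonneg (hq0 t s) ENNReal.toReal_nonneg)]
      _ = ∑ s, (p t s + q t s) := by
          refine Finset.sum_congr rfl fun s _ => ?_
          rw [Finset.sum_add_distrib, ← Finset.mul_sum, ← Finset.mul_sum,
            pmf_sum_toReal, pmf_sum_toReal, mul_one, mul_one]
      _ = 2 := by rw [Finset.sum_add_distrib, hpsum, hqsum]; norm_num
  -- per-state-action abs bounded by 2
  have habs2 : ∀ t (s : S) (a : A),
      |p t s * ((π s) a).toReal - q t s * ((πE s) a).toReal| ≤ 2 := by
    intro t s a
    refine (abs_sub _ _).trans ?_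
    rw [abs_of_nonneg (mul_nonneg (hp0 t s) ENNReal.toReal_nonneg),
      abs_of_nonneg (mul_nonneg (hq0 t s) ENNReal.toReal_nonneg)]
    have h1 : p t s * ((π s) a).toReal ≤ 1 :=
      mul_le_one₀ (hp1 t s) ENNReal.toReal_nonneg (pmf_toReal_le_one _ _)
    have h2 : q t s * ((πE s) a).toReal ≤ 1 :=
      mul_le_one₀ (hq1 t s) ENNReal.toReal_nonneg (pmf_toReal_le_one _ _)
    linarith
  have hCDε : ∀ t, Ct t ≤ Dt t + ε t := by
    intro t
    have key : ∀ s, ∑ a, |p t s * ((π s) a).toReal - q t s * ((πE s) a).toReal|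
        ≤ |p t s - q t s| + q t s * δ s := by
      intro s
      calc ∑ a, |p t s * ((π s) a).toReal - q t s * ((πE s) a).toReal|
          ≤ ∑ a, (|p t s - q t s| * ((π s) a).toReal
              + q t s * |((π s) a).toReal - ((πE s) a).toReal|) := by
            refine Finset.sum_le_sum fun a _ => ?_
            have hid : p t s * ((π s) a).toReal - q t s * ((πE s) a).toReal
                = (p t s - q t s) * ((π s) a).toReal
                  + q t s * (((π s) a).toReal - ((πE s) a).toReal) := by ring
            rw [hid]
            refine (abs_add_le _ _).trans ?_
            rw [abs_mul, abs_mul, abs_of_nonneg (ENNReal.toReal_nonneg),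
              abs_of_nonneg (hq0 t s)]
        _ = |p t s - q t s| + q t s * δ s := by
            rw [Finset.sum_add_distrib, ← Finset.mul_sum, ← Finset.mul_sum,
              pmf_sum_toReal, mul_one, hδ]
    calc Ct t ≤ ∑ s, (|p t s - q t s| + q t s * δ s) :=
          Finset.sum_le_sum fun s _ => key s
      _ = Dt t + ε t := Finset.sum_add_distrib
  have hDsucc : ∀ t, Dt (t + 1) ≤ Ct t := by
    intro t
    have key : ∀ s', |p (t + 1) s' - q (t + 1) s'|
        ≤ ∑ s, ∑ a, |p t s * ((π s) a).toReal - q t s * ((πE s) a).toReal|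
            * ((T s a) s').toReal := by
      intro s'
      have hpe : p (t + 1) s'
          = ∑ s, ∑ a, p t s * ((π s) a).toReal * ((T s a) s').toReal := by
        rw [hp]; rfl
      have hqe : q (t + 1) s'
          = ∑ s, ∑ a, q t s * ((πE s) a).toReal * ((T s a) s').toReal := by
        rw [hq]; rfl
      rw [hpe, hqe, ← Finset.sum_sub_distrib]
      refine (Finset.abs_sum_le_sum_abs _ _).trans ?_
      refine Finset.sum_le_sum fun s _ => ?_
      rw [← Finset.sum_sub_distrib]
      refine (Finset.abs_sum_le_sum_abs _ _).trans ?_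
      refine Finset.sum_le_sum fun a _ => ?_
      have hid : p t s * ((π s) a).toReal * ((T s a) s').toReal
          - q t s * ((πE s) a).toReal * ((T s a) s').toReal
          = (p t s * ((π s) a).toReal - q t s * ((πE s) a).toReal)
            * ((T s a) s').toReal := by ring
      rw [hid, abs_mul, abs_of_nonneg ENNReal.toReal_nonneg]
    calc Dt (t + 1) ≤ ∑ s', ∑ s, ∑ a,
          |p t s * ((π s) a).toReal - q t s * ((πE s) a).toReal|
            * ((T s a) s').toReal := Finset.sum_le_sum fun s' _ => key s'
      _ = ∑ s, ∑ a, ∑ s',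
          |p t s * ((π s) a).toReal - q t s * ((πE s) a).toReal|
            * ((T s a) s').toReal := by
          rw [Finset.sum_comm]
          exact Finset.sum_congr rfl fun s _ => Finset.sum_comm
      _ = Ct t := by
          refine Finset.sum_congr rfl fun s _ => Finset.sum_congr rfl fun a _ => ?_
          rw [← Finset.mul_sum, pmf_sum_toReal, mul_one]
  have hD0 : Dt 0 = 0 := by
    have : ∀ s : S, p 0 s - q 0 s = 0 := by
      intro s
      rw [hp, hq]
      show (ρ₀ s).toReal - (ρ₀ s).toReal = 0
      ring
    simp [hDt, this]
  have hDle : ∀ t, Dt t ≤ ∑ u ∈ Finset.range t, ε u := by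
    intro t
    induction t with
    | zero => simp [hD0]
    | succ t ih =>
        calc Dt (t + 1) ≤ Ct t := hDsucc t
          _ ≤ Dt t + ε t := hCDε t
          _ ≤ (∑ u ∈ Finset.range t, ε u) + ε t := by linarith
          _ = ∑ u ∈ Finset.range (t + 1), ε u := (Finset.sum_range_succ _ _).symm
  have hCle : ∀ t, Ct t ≤ ∑ u ∈ Finset.range (t + 1), ε u := by
    intro t
    rw [Finset.sum_range_succ]
    have := hDle t
    have := hCDε t
    linarith
  -- Summability facts
  have hgeom : Summable fun t : ℕ => γ ^ t := summable_geometric_of_lt_one hγ0 hγ1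
  have hgeom2 : Summable fun t : ℕ => 2 * γ ^ t := hgeom.mul_left 2
  have hsummand : ∀ (π' : S → PMF A) (sa : S × A),
      Summable fun t => γ ^ t * stateDist T π' ρ₀ t sa.1 * ((π' sa.1) sa.2).toReal := by
    intro π' sa
    refine Summable.of_nonneg_of_le (fun t => ?_) (fun t => ?_) hgeom
    · have := stateDist_nonneg T π' ρ₀ t sa.1
      positivity
    · calc γ ^ t * stateDist T π' ρ₀ t sa.1 * ((π' sa.1) sa.2).toReal
          ≤ γ ^ t * 1 * 1 := by
            refine mul_le_mul (mul_le_mul_of_nonneg_left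
              (stateDist_le_one T π' ρ₀ t sa.1) (pow_nonneg hγ0 t))
              (pmf_toReal_le_one _ _) ENNReal.toReal_nonneg ?_
            have := pow_nonneg hγ0 t
            linarith [pow_nonneg hγ0 t]
        _ = γ ^ t := by ring
  have hsumabs : ∀ sa : S × A, Summable fun t =>
      γ ^ t * |p t sa.1 * ((π sa.1) sa.2).toReal - q t sa.1 * ((πE sa.1) sa.2).toReal| := by
    intro sa
    refine Summable.of_nonneg_of_le (fun t => by positivity) (fun t => ?_) hgeom2
    calc γ ^ t * |p t sa.1 * ((π sa.1) sa.2).toReal - q t sa.1 * ((πE sa.1) sa.2).toReal|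
        ≤ γ ^ t * 2 := mul_le_mul_of_nonneg_left (habs2 t sa.1 sa.2) (pow_nonneg hγ0 t)
      _ = 2 * γ ^ t := by ring
  have hsumC : Summable fun t => γ ^ t * Ct t := by
    refine Summable.of_nonneg_of_le
      (fun t => mul_nonneg (pow_nonneg hγ0 t) (hC0 t)) (fun t => ?_) hgeom2
    calc γ ^ t * Ct t ≤ γ ^ t * 2 :=
          mul_le_mul_of_nonneg_left (hC2 t) (pow_nonneg hγ0 t)
      _ = 2 * γ ^ t := by ring
  have hsumε : Summable fun t => γ ^ t * ε t := by
    refine Summable.of_nonneg_of_le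
      (fun t => mul_nonneg (pow_nonneg hγ0 t) (hε0 t)) (fun t => ?_) hgeom2
    calc γ ^ t * ε t ≤ γ ^ t * 2 :=
          mul_le_mul_of_nonneg_left (hε2 t) (pow_nonneg hγ0 t)
      _ = 2 * γ ^ t := by ring
  have hsumqδ : ∀ s : S, Summable fun t => γ ^ t * q t s * δ s := by
    intro s
    refine Summable.of_nonneg_of_le
      (fun t => mul_nonneg (mul_nonneg (pow_nonneg hγ0 t) (hq0 t s)) (hδ0 s))
      (fun t => ?_) hgeom2
    calc γ ^ t * q t s * δ s ≤ γ ^ t * 1 * 2 := by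
          refine mul_le_mul (mul_le_mul_of_nonneg_left (hq1 t s) (pow_nonneg hγ0 t))
            (hδ2 s) (hδ0 s) ?_
          have := pow_nonneg hγ0 t
          linarith
      _ = 2 * γ ^ t := by ring
  -- pointwise bound on |saOcc π - saOcc πE|
  have hpoint : ∀ sa : S × A,
      |saOcc T π ρ₀ γ sa - saOcc T πE ρ₀ γ sa| ≤ (1 - γ) *
        ∑' t, γ ^ t * |p t sa.1 * ((π sa.1) sa.2).toReal
          - q t sa.1 * ((πE sa.1) sa.2).toReal| := by
    intro sa
    rw [saOcc, saOcc, ← mul_sub, abs_mul, abs_of_nonneg h1γ.le,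
      ← Summable.tsum_sub (hsummand π sa) (hsummand πE sa)]
    refine mul_le_mul_of_nonneg_left ?_ h1γ.le
    have hsum' : Summable fun t =>
        |γ ^ t * p t sa.1 * ((π sa.1) sa.2).toReal
          - γ ^ t * q t sa.1 * ((πE sa.1) sa.2).toReal| := by
      have heq : ∀ t : ℕ, |γ ^ t * p t sa.1 * ((π sa.1) sa.2).toReal
          - γ ^ t * q t sa.1 * ((πE sa.1) sa.2).toReal|
          = γ ^ t * |p t sa.1 * ((π sa.1) sa.2).toReal
            - q t sa.1 * ((πE sa.1) sa.2).toReal| := by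
        intro t
        have hid : γ ^ t * p t sa.1 * ((π sa.1) sa.2).toReal
            - γ ^ t * q t sa.1 * ((πE sa.1) sa.2).toReal
            = γ ^ t * (p t sa.1 * ((π sa.1) sa.2).toReal
              - q t sa.1 * ((πE sa.1) sa.2).toReal) := by ring
        rw [hid, abs_mul, abs_of_nonneg (pow_nonneg hγ0 t)]
      simp only [heq]
      exact hsumabs sa
    calc |∑' t, (γ ^ t * p t sa.1 * ((π sa.1) sa.2).toReal
            - γ ^ t * q t sa.1 * ((πE sa.1) sa.2).toReal)|
        ≤ ∑' t, |γ ^ t * p t sa.1 * ((π sa.1) sa.2).toReal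
            - γ ^ t * q t sa.1 * ((πE sa.1) sa.2).toReal| := by
          have := norm_tsum_le_tsum_norm (f := fun t =>
            γ ^ t * p t sa.1 * ((π sa.1) sa.2).toReal
              - γ ^ t * q t sa.1 * ((πE sa.1) sa.2).toReal)
            (by simpa [Real.norm_eq_abs] using hsum')
          simpa [Real.norm_eq_abs] using this
      _ = ∑' t, γ ^ t * |p t sa.1 * ((π sa.1) sa.2).toReal
            - q t sa.1 * ((πE sa.1) sa.2).toReal| := by
          refine tsum_congr fun t => ?_
          have hid : γ ^ t * p t sa.1 * ((π sa.1) sa.2).toReal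
              - γ ^ t * q t sa.1 * ((πE sa.1) sa.2).toReal
              = γ ^ t * (p t sa.1 * ((π sa.1) sa.2).toReal
                - q t sa.1 * ((πE sa.1) sa.2).toReal) := by ring
          rw [hid, abs_mul, abs_of_nonneg (pow_nonneg hγ0 t)]
  -- step 1 : sum over sa
  have step1 : ∑ sa : S × A, |saOcc T π ρ₀ γ sa - saOcc T πE ρ₀ γ sa|
      ≤ (1 - γ) * ∑' t, γ ^ t * Ct t := by
    calc ∑ sa : S × A, |saOcc T π ρ₀ γ sa - saOcc T πE ρ₀ γ sa|
        ≤ ∑ sa : S × A, (1 - γ) * ∑' t, γ ^ t *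
            |p t sa.1 * ((π sa.1) sa.2).toReal - q t sa.1 * ((πE sa.1) sa.2).toReal| :=
          Finset.sum_le_sum fun sa _ => hpoint sa
      _ = (1 - γ) * ∑ sa : S × A, ∑' t, γ ^ t *
            |p t sa.1 * ((π sa.1) sa.2).toReal - q t sa.1 * ((πE sa.1) sa.2).toReal| :=
          (Finset.mul_sum _ _ _).symm
      _ = (1 - γ) * ∑' t, ∑ sa : S × A, γ ^ t *
            |p t sa.1 * ((π sa.1) sa.2).toReal - q t sa.1 * ((πE sa.1) sa.2).toReal| := by
          rw [Summable.tsum_finsetSum (fun sa _ => hsumabs sa)]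
      _ = (1 - γ) * ∑' t, γ ^ t * Ct t := by
          refine congrArg _ (tsum_congr fun t => ?_)
          rw [hCt]
          rw [Finset.mul_sum]
          rw [Fintype.sum_prod_type]
          exact Finset.sum_congr rfl fun s _ => (Finset.mul_sum _ _ _).symm
  -- step 2 : Abel-type bound
  have step2 : ∑' t, γ ^ t * Ct t ≤ (1 / (1 - γ)) * ∑' t, γ ^ t * ε t := by
    refine Real.tsum_le_of_sum_range_le
      (fun t => mul_nonneg (pow_nonneg hγ0 t) (hC0 t)) fun N => ?_
    have geo_tail : ∀ u : ℕ, ∑ t ∈ Finset.Ico u N, γ ^ t ≤ γ ^ u * (1 / (1 - γ)) := by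
      intro u
      rcases le_or_gt u N with hu | hu
      · rw [Finset.sum_Ico_eq_sum_range]
        have : ∀ i : ℕ, γ ^ (u + i) = γ ^ u * γ ^ i := fun i => pow_add γ u i
        simp only [this]
        rw [← Finset.mul_sum]
        refine mul_le_mul_of_nonneg_left ?_ (pow_nonneg hγ0 u)
        calc ∑ i ∈ Finset.range (N - u), γ ^ i
            ≤ ∑' i : ℕ, γ ^ i :=
              Summable.sum_le_tsum _ (fun i _ => pow_nonneg hγ0 i) hgeom
          _ = (1 - γ)⁻¹ := tsum_geometric_of_lt_one hγ0 hγ1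
          _ = 1 / (1 - γ) := by rw [one_div]
      · rw [Finset.Ico_eq_empty (by omega)]
        simp only [Finset.sum_empty]
        positivity
    calc ∑ t ∈ Finset.range N, γ ^ t * Ct t
        ≤ ∑ t ∈ Finset.range N, γ ^ t * ∑ u ∈ Finset.range (t + 1), ε u :=
          Finset.sum_le_sum fun t _ =>
            mul_le_mul_of_nonneg_left (hCle t) (pow_nonneg hγ0 t)
      _ = ∑ t ∈ Finset.range N, ∑ u ∈ Finset.range (t + 1), γ ^ t * ε u := by
          exact Finset.sum_congr rfl fun t _ => Finset.mul_sum _ _ _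
      _ = ∑ u ∈ Finset.range N, ∑ t ∈ Finset.Ico u N, γ ^ t * ε u := by
          simp only [Finset.range_eq_Ico]
          exact (Finset.sum_Ico_Ico_comm 0 N (fun u t => γ ^ t * ε u)).symm
      _ ≤ ∑ u ∈ Finset.range N, (γ ^ u * (1 / (1 - γ))) * ε u := by
          refine Finset.sum_le_sum fun u _ => ?_
          rw [← Finset.sum_mul]
          exact mul_le_mul_of_nonneg_right (geo_tail u) (hε0 u)
      _ = (1 / (1 - γ)) * ∑ u ∈ Finset.range N, γ ^ u * ε u := by
          rw [Finset.mul_sum]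
          exact Finset.sum_congr rfl fun u _ => by ring
      _ ≤ (1 / (1 - γ)) * ∑' u, γ ^ u * ε u := by
          refine mul_le_mul_of_nonneg_left ?_ (by positivity)
          exact Summable.sum_le_tsum _ (fun u _ => mul_nonneg (pow_nonneg hγ0 u) (hε0 u)) hsumε
  -- RHS equality
  have hRHS : (1 / (1 - γ)) * ∑ s : S, stateOcc T πE ρ₀ γ s *
      tvDist (fun a => ((π s) a).toReal) (fun a => ((πE s) a).toReal)
      = (1 / 2) * ∑' t, γ ^ t * ε t := by
    have hterm : ∀ s : S, stateOcc T πE ρ₀ γ s *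
        tvDist (fun a => ((π s) a).toReal) (fun a => ((πE s) a).toReal)
        = (1 - γ) * (1 / 2) * ∑' t, γ ^ t * q t s * δ s := by
      intro s
      have htv : tvDist (fun a => ((π s) a).toReal) (fun a => ((πE s) a).toReal)
          = (1 / 2) * δ s := rfl
      rw [htv]
      calc stateOcc T πE ρ₀ γ s * ((1 / 2) * δ s)
          = (1 - γ) * (1 / 2) * ((∑' t, γ ^ t * q t s) * δ s) := by
            rw [stateOcc, ← hq]; ring
        _ = (1 - γ) * (1 / 2) * ∑' t, γ ^ t * q t s * δ s := by rw [tsum_mul_right]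
    rw [Finset.sum_congr rfl fun s _ => hterm s]
    have : ∑ s : S, (1 - γ) * (1 / 2) * ∑' t, γ ^ t * q t s * δ s
        = (1 - γ) * (1 / 2) * ∑ s : S, ∑' t, γ ^ t * q t s * δ s := by
      rw [Finset.mul_sum]
    rw [this, ← Summable.tsum_finsetSum (fun s _ => hsumqδ s)]
    have hepseq : ∀ t : ℕ, ∑ s : S, γ ^ t * q t s * δ s = γ ^ t * ε t := by
      intro t
      rw [hε, Finset.mul_sum]
      exact Finset.sum_congr rfl fun s _ => by ring
    rw [tsum_congr hepseq]
    field_simp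
  -- conclude
  rw [tvDist, hRHS]
  have hfin : (1 - γ) * ((1 / (1 - γ)) * ∑' t, γ ^ t * ε t) = ∑' t, γ ^ t * ε t := by
    field_simp
  have h2 : ∑ sa : S × A, |saOcc T π ρ₀ γ sa - saOcc T πE ρ₀ γ sa|
      ≤ ∑' t, γ ^ t * ε t := by
    calc ∑ sa : S × A, |saOcc T π ρ₀ γ sa - saOcc T πE ρ₀ γ sa|
        ≤ (1 - γ) * ∑' t, γ ^ t * Ct t := step1
      _ ≤ (1 - γ) * ((1 / (1 - γ)) * ∑' t, γ ^ t * ε t) :=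
          mul_le_mul_of_nonneg_left step2 h1γ.le
      _ = ∑' t, γ ^ t * ε t := hfin
  linarith
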